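/- For every positive integer n, ∑_{k=1}^{n} k · binomial(n,k)^2 · binomial(n+k,k)^2 · (1/(2k) + ∑_{i=1}^{n+k} 1/i + ∑_{i=1}^{n-k} 1/i - 2·∑_{i=1}^{k} 1/i) = 0. -/

import Mathlib

open Polynomial Finset

noncomputable section
namespace AO

def H (m : ℕ) : ℚ := ∑ i ∈ Finset.Icc 1 m, (1:ℚ)/i
def Ak (n k : ℕ) : ℚ := (n.choose k : ℚ)^2 * ((n+k).choose k : ℚ)^2
def Bk (n k : ℕ) : ℚ := Ak n k * (1 + 2*k*(H (n+k) + H (n-k) - 2*H k))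
def ak (n k : ℕ) : ℚ := ∏ j ∈ Finset.Icc 1 n, ((k:ℚ)+j)^2
def qk (n k : ℕ) : ℚ := ∏ j ∈ (Finset.range (n+1)).erase k, ((j:ℚ)-k)^2

lemma erase_split {n k : ℕ} (hk : k ≤ n) :
    (Finset.range (n+1)).erase k = Finset.range k ∪ Finset.Icc (k+1) n := by
  ext i; simp only [mem_erase, mem_range, mem_union, mem_Icc]; omega

lemma disj_split {n k : ℕ} : Disjoint (Finset.range k) (Finset.Icc (k+1) n) := by
  rw [Finset.disjoint_left]; intro i hi hi'
  simp only [mem_range] at hi; simp only [mem_Icc] at hi'; omega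

lemma H_eq_range (m : ℕ) : H m = ∑ i ∈ Finset.range m, (1:ℚ)/(i+1) := by
  rw [H, ← Finset.Ico_add_one_right_eq_Icc, Finset.sum_Ico_eq_sum_range]
  refine Finset.sum_congr rfl fun i _ => ?_
  push_cast; ring_nf

lemma sum_range_inv_sub (k : ℕ) :
    ∑ i ∈ Finset.range k, (1:ℚ)/((i:ℚ)-k) = -H k := by
  rw [H_eq_range, ← Finset.sum_range_reflect (fun i => (1:ℚ)/(i+1)) k, ← Finset.sum_neg_distrib]
  refine Finset.sum_congr rfl fun i hi => ?_
  simp only [mem_range] at hi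
  have h1 : ((k - 1 - i : ℕ) : ℚ) = (k:ℚ) - 1 - i := by
    have h0 : ((k - 1 - i + i + 1 : ℕ) : ℚ) = ((k:ℕ):ℚ) := by
      rw [show k - 1 - i + i + 1 = k from by omega]
    push_cast at h0; linarith
  rw [h1]
  have hik : (i:ℚ) < k := by exact_mod_cast hi
  have h' : ((k:ℚ) - i) ≠ 0 := by intro h; nlinarith
  have h : ((i:ℚ) - k) ≠ 0 := by intro h; nlinarith
  field_simp
  rw [show (i:ℚ)-k = -((k:ℚ)-i) from by ring, neg_div, show (k:ℚ)-1-i+1 = (k:ℚ)-i from by ring,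
    div_self h', neg_neg]

lemma sum_Icc_inv_sub (n k : ℕ) :
    ∑ i ∈ Finset.Icc (k+1) n, (1:ℚ)/((i:ℚ)-k) = H (n-k) := by
  rw [H_eq_range, ← Finset.Ico_add_one_right_eq_Icc, Finset.sum_Ico_eq_sum_range]
  rw [show n + 1 - (k+1) = n - k from by omega]
  refine Finset.sum_congr rfl fun i _ => ?_
  push_cast; ring_nf

lemma sigma_eq {n k : ℕ} (hk : k ≤ n) :
    ∑ i ∈ (Finset.range (n+1)).erase k, (1:ℚ)/((i:ℚ)-k) = H (n-k) - H k := by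
  rw [erase_split hk, Finset.sum_union disj_split, sum_range_inv_sub, sum_Icc_inv_sub]
  ring

lemma tau_eq (n k : ℕ) :
    ∑ m ∈ Finset.Icc 1 n, (1:ℚ)/((k:ℚ)+m) = H (n+k) - H k := by
  induction n with
  | zero => simp [H]
  | succ n ih =>
    rw [Finset.sum_Icc_succ_top (by omega), ih]
    have hH : H (n+1+k) = H (n+k) + 1/(((n+k)+1:ℕ):ℚ) := by
      rw [show n+1+k = (n+k)+1 from by omega, H, Finset.sum_Icc_succ_top (by omega), ← H]
    rw [hH]; push_cast; ring

lemma prod_range_sub_sq (k : ℕ) :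
    ∏ j ∈ Finset.range k, ((j:ℚ)-k)^2 = ((k.factorial : ℚ))^2 := by
  have h1 : ∏ j ∈ Finset.range k, ((k:ℚ)-j) = (k.factorial : ℚ) := by
    rw [← Finset.prod_range_reflect (fun j => (k:ℚ)-j) k]
    rw [← Finset.prod_range_add_one_eq_factorial k]
    push_cast
    refine Finset.prod_congr rfl fun i hi => ?_
    simp only [mem_range] at hi
    have h0 : ((k - 1 - i + i + 1 : ℕ) : ℚ) = ((k:ℕ):ℚ) := by
      rw [show k - 1 - i + i + 1 = k from by omega]
    push_cast at h0; linarith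
  calc ∏ j ∈ Finset.range k, ((j:ℚ)-k)^2 = ∏ j ∈ Finset.range k, ((k:ℚ)-j)^2 := by
        refine Finset.prod_congr rfl fun i _ => by ring
    _ = ((k.factorial : ℚ))^2 := by rw [← h1, Finset.prod_pow]

lemma prod_Icc_sub_sq (n k : ℕ) :
    ∏ j ∈ Finset.Icc (k+1) n, ((j:ℚ)-k)^2 = (((n-k).factorial : ℚ))^2 := by
  have h1 : ∏ j ∈ Finset.Icc (k+1) n, ((j:ℚ)-k) = ((n-k).factorial : ℚ) := by
    rw [← Finset.Ico_add_one_right_eq_Icc, Finset.prod_Ico_eq_prod_range,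
      show n + 1 - (k+1) = n - k from by omega,
      ← Finset.prod_range_add_one_eq_factorial (n-k)]
    push_cast
    refine Finset.prod_congr rfl fun i _ => by ring
  rw [← h1, Finset.prod_pow]

lemma qk_eq {n k : ℕ} (hk : k ≤ n) :
    qk n k = ((k.factorial : ℚ) * ((n-k).factorial : ℚ))^2 := by
  rw [qk, erase_split hk, Finset.prod_union disj_split, prod_range_sub_sq, prod_Icc_sub_sq]
  ring

lemma ak_eq (n k : ℕ) :
    ((k.factorial : ℚ))^2 * ak n k = (((n+k).factorial : ℚ))^2 := by
  induction n with
  | zero => simp [ak]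
  | succ n ih =>
    rw [ak, Finset.prod_Icc_succ_top (by omega), ← ak, ← mul_assoc, ih,
      show n + 1 + k = (n + k) + 1 from by omega, Nat.factorial_succ]
    push_cast; ring

lemma Ak_mul_qk {n k : ℕ} (hk : k ≤ n) : Ak n k * qk n k = ak n k := by
  have h1 : n.choose k * k.factorial * (n-k).factorial = n.factorial :=
    Nat.choose_mul_factorial_mul_factorial hk
  have h2 : (n+k).choose k * k.factorial * n.factorial = (n+k).factorial := by
    have := Nat.choose_mul_factorial_mul_factorial (show k ≤ n + k by omega)
    rwa [show n + k - k = n from by omega] at this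
  have hk2 : ((k.factorial:ℚ))^2 ≠ 0 := by positivity
  have c1 : (n.choose k : ℚ) * k.factorial * (n-k).factorial = n.factorial := by
    exact_mod_cast h1
  have c2 : ((n+k).choose k : ℚ) * k.factorial * n.factorial = (n+k).factorial := by
    exact_mod_cast h2
  have key : ((n.choose k:ℚ) * ((n+k).choose k) * k.factorial * (n-k).factorial * k.factorial)^2
      = (((n+k).factorial:ℚ))^2 := by
    rw [show (n.choose k:ℚ) * ((n+k).choose k) * k.factorial * (n-k).factorial * k.factorial
      = ((n+k).choose k:ℚ) * k.factorial * ((n.choose k:ℚ) * k.factorial * (n-k).factorial)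
      from by ring, c1, c2]
  apply mul_left_cancel₀ hk2
  rw [ak_eq n k, qk_eq hk, Ak, ← key]
  ring

def Pp (n : ℕ) : ℚ[X] := X * ∏ j ∈ Finset.Icc 1 n, (X - C (j:ℚ))^2
def Qp (n k : ℕ) : ℚ[X] := ∏ j ∈ (Finset.range (n+1)).erase k, (X + C (j:ℚ))^2
def Fp (n k : ℕ) : ℚ[X] := C (-(k:ℚ) * Ak n k) + C (Bk n k) * (X + C (k:ℚ))
def Dp (n : ℕ) : ℚ[X] := Pp n - ∑ k ∈ Finset.range (n+1), Fp n k * Qp n k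

lemma Pp_eval (n k : ℕ) : (Pp n).eval (-(k:ℚ)) = -(k:ℚ) * ak n k := by
  rw [Pp, eval_mul, eval_X, eval_prod, ak]
  congr 1
  refine Finset.prod_congr rfl fun j _ => ?_
  simp only [eval_pow, eval_sub, eval_X, eval_C]
  ring

lemma Qp_eval_self {n k : ℕ} (hk : k ∈ Finset.range (n+1)) :
    (Qp n k).eval (-(k:ℚ)) = qk n k := by
  rw [Qp, eval_prod, qk]
  refine Finset.prod_congr rfl fun j _ => ?_
  simp only [eval_pow, eval_add, eval_X, eval_C]
  ring

lemma Qp_eval_other {n k j : ℕ} (hk : k ∈ Finset.range (n+1)) (hj : j ∈ Finset.range (n+1))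
    (hne : j ≠ k) : (Qp n j).eval (-(k:ℚ)) = 0 := by
  rw [Qp, eval_prod]
  refine Finset.prod_eq_zero (Finset.mem_erase.mpr ⟨fun h => hne (by exact_mod_cast h.symm), hk⟩) ?_
  simp only [eval_pow, eval_add, eval_X, eval_C]
  ring

lemma derivative_fprod {ι : Type*} [DecidableEq ι] (s : Finset ι) (f : ι → ℚ[X]) :
    derivative (∏ i ∈ s, f i) = ∑ i ∈ s, (∏ j ∈ s.erase i, f j) * derivative (f i) := by
  classical
  induction s using Finset.induction_on with
  | empty => simp
  | @insert a s ha ih =>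
    rw [Finset.prod_insert ha, derivative_mul, ih, Finset.sum_insert ha,
      Finset.erase_insert ha, Finset.mul_sum]
    have hs : ∀ i ∈ s, f a * ((∏ j ∈ s.erase i, f j) * derivative (f i))
        = (∏ j ∈ (insert a s).erase i, f j) * derivative (f i) := by
      intro i hi
      rw [Finset.erase_insert_of_ne (by rintro rfl; exact ha hi),
        Finset.prod_insert (fun h => ha (Finset.mem_of_mem_erase h))]
      ring
    rw [Finset.sum_congr rfl hs]
    ring

lemma Pp_deriv_eval (n k : ℕ) :
    (derivative (Pp n)).eval (-(k:ℚ)) = ak n k + 2*k * (ak n k * (H (n+k) - H k)) := by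
  rw [Pp, derivative_mul, derivative_X, one_mul, eval_add, eval_mul, eval_X, eval_prod,
    derivative_fprod, eval_finset_sum]
  have h1 : ∏ j ∈ Finset.Icc 1 n, ((X - C (j:ℚ))^2).eval (-(k:ℚ)) = ak n k := by
    rw [ak]
    refine Finset.prod_congr rfl fun j _ => ?_
    simp only [eval_pow, eval_sub, eval_X, eval_C]; ring
  have h2 : ∀ m ∈ Finset.Icc 1 n,
      ((∏ j ∈ (Finset.Icc 1 n).erase m, (X - C (j:ℚ))^2)
        * derivative ((X - C (m:ℚ))^2)).eval (-(k:ℚ))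
      = -2 * (ak n k * (1/((k:ℚ)+m))) := by
    intro m hm
    have hm1 : 1 ≤ m := (Finset.mem_Icc.mp hm).1
    have hm1' : (1:ℚ) ≤ (m:ℚ) := by exact_mod_cast hm1
    have hk0 : (0:ℚ) ≤ (k:ℚ) := Nat.cast_nonneg k
    have hkm : ((k:ℚ)+m) ≠ 0 := by intro h; linarith
    have hprod : ((k:ℚ)+m)^2 * ∏ j ∈ (Finset.Icc 1 n).erase m, ((k:ℚ)+j)^2 = ak n k := by
      rw [ak]; exact Finset.mul_prod_erase _ (fun j : ℕ => ((k:ℚ)+(j:ℚ))^2) hm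
    rw [eval_mul, eval_prod]
    have e1 : ∏ j ∈ (Finset.Icc 1 n).erase m, ((X - C (j:ℚ))^2).eval (-(k:ℚ))
        = ∏ j ∈ (Finset.Icc 1 n).erase m, ((k:ℚ)+j)^2 := by
      refine Finset.prod_congr rfl fun j _ => ?_
      simp only [eval_pow, eval_sub, eval_X, eval_C]; ring
    have e2 : (derivative ((X - C (m:ℚ))^2)).eval (-(k:ℚ)) = -2*((k:ℚ)+m) := by
      simp only [derivative_pow, derivative_sub, derivative_X, derivative_C, sub_zero,
        eval_mul, eval_pow, eval_sub, eval_X, eval_C, eval_one, eval_natCast]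
      ring
    rw [e1, e2, ← hprod]
    field_simp
  rw [Finset.sum_congr rfl h2, h1, ← Finset.mul_sum, ← Finset.mul_sum, tau_eq n k]
  ring

lemma eval_deriv_sq_add (a : ℚ) (c : ℚ) :
    (derivative ((X + C a)^2)).eval c = 2*(c + a) := by
  simp only [derivative_pow, derivative_add, derivative_X, derivative_C, add_zero,
    eval_mul, eval_pow, eval_add, eval_X, eval_C, eval_one, eval_natCast]
  ring

lemma Qp_deriv_eval_self {n k : ℕ} (hk : k ≤ n) :
    (derivative (Qp n k)).eval (-(k:ℚ)) = 2 * (qk n k * (H (n-k) - H k)) := by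
  rw [Qp, derivative_fprod, eval_finset_sum]
  have h2 : ∀ i ∈ (Finset.range (n+1)).erase k,
      ((∏ j ∈ ((Finset.range (n+1)).erase k).erase i, (X + C (j:ℚ))^2)
        * derivative ((X + C (i:ℚ))^2)).eval (-(k:ℚ))
      = 2 * (qk n k * (1/((i:ℚ)-k))) := by
    intro i hi
    have hik : i ≠ k := (Finset.mem_erase.mp hi).1
    have hik' : ((i:ℚ)-k) ≠ 0 := by
      intro h
      exact hik (by exact_mod_cast sub_eq_zero.mp h)
    have hprod : ((i:ℚ)-k)^2 * ∏ j ∈ ((Finset.range (n+1)).erase k).erase i, ((j:ℚ)-k)^2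
        = qk n k := by
      rw [qk]; exact Finset.mul_prod_erase _ (fun j : ℕ => ((j:ℚ)-(k:ℚ))^2) hi
    rw [eval_mul, eval_prod]
    have e1 : ∏ j ∈ ((Finset.range (n+1)).erase k).erase i, ((X + C (j:ℚ))^2).eval (-(k:ℚ))
        = ∏ j ∈ ((Finset.range (n+1)).erase k).erase i, ((j:ℚ)-k)^2 := by
      refine Finset.prod_congr rfl fun j _ => ?_
      simp only [eval_pow, eval_add, eval_X, eval_C]; ring
    rw [e1, eval_deriv_sq_add, ← hprod]
    field_simp
    ring
  rw [Finset.sum_congr rfl h2, ← Finset.mul_sum, ← Finset.mul_sum, sigma_eq hk]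

lemma Qp_deriv_eval_other {n k j : ℕ} (hk : k ∈ Finset.range (n+1)) (hne : j ≠ k) :
    (derivative (Qp n j)).eval (-(k:ℚ)) = 0 := by
  rw [Qp, derivative_fprod, eval_finset_sum]
  refine Finset.sum_eq_zero fun i hi => ?_
  rw [eval_mul]
  by_cases hik : i = k
  · subst hik
    rw [eval_deriv_sq_add]
    ring
  · have hkmem : k ∈ ((Finset.range (n+1)).erase j).erase i :=
      Finset.mem_erase.mpr ⟨fun h => hik (by exact_mod_cast h.symm),
        Finset.mem_erase.mpr ⟨fun h => hne (by exact_mod_cast h.symm), hk⟩⟩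
    rw [eval_prod]
    rw [Finset.prod_eq_zero hkmem (by simp only [eval_pow, eval_add, eval_X, eval_C]; ring)]
    ring

lemma Fp_eval_self (n k : ℕ) : (Fp n k).eval (-(k:ℚ)) = -(k:ℚ) * Ak n k := by
  simp [Fp]

lemma Fp_deriv (n k : ℕ) : derivative (Fp n k) = C (Bk n k) := by
  simp [Fp]

lemma Dp_eval {n k : ℕ} (hk : k ∈ Finset.range (n+1)) : (Dp n).eval (-(k:ℚ)) = 0 := by
  have hkn : k ≤ n := by simpa [Nat.lt_succ_iff] using hk
  rw [Dp, eval_sub, eval_finset_sum, Pp_eval]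
  rw [Finset.sum_eq_single k
    (fun j hj hne => by rw [eval_mul, Qp_eval_other hk hj hne, mul_zero])
    (fun h => absurd hk h)]
  rw [eval_mul, Fp_eval_self, Qp_eval_self hk]
  have aq := Ak_mul_qk hkn
  nlinarith [aq]

lemma Dp_deriv_eval {n k : ℕ} (hk : k ∈ Finset.range (n+1)) :
    (derivative (Dp n)).eval (-(k:ℚ)) = 0 := by
  have hkn : k ≤ n := by simpa [Nat.lt_succ_iff] using hk
  rw [Dp, derivative_sub, derivative_sum, eval_sub, eval_finset_sum, Pp_deriv_eval]
  rw [Finset.sum_eq_single k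
    (fun j hj hne => by
      rw [derivative_mul, eval_add, eval_mul, eval_mul, Qp_eval_other hk hj hne,
        Qp_deriv_eval_other hk hne, mul_zero, mul_zero, add_zero])
    (fun h => absurd hk h)]
  rw [derivative_mul, eval_add, eval_mul, eval_mul, Fp_deriv, eval_C, Fp_eval_self,
    Qp_eval_self hk, Qp_deriv_eval_self hkn, Bk]
  have aq := Ak_mul_qk hkn
  linear_combination (-1 - 2*(k:ℚ)*(H (n+k) - H k)) * aq

lemma sq_dvd_of_double_root {p : ℚ[X]} {a : ℚ} (h1 : p.eval a = 0)
    (h2 : (derivative p).eval a = 0) : (X - C a)^2 ∣ p := by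
  obtain ⟨q, hq⟩ := (dvd_iff_isRoot.mpr h1)
  have hq' : (derivative p).eval a = q.eval a := by
    rw [hq, derivative_mul]
    simp
  have : (X - C a) ∣ q := dvd_iff_isRoot.mpr (hq'.symm.trans h2)
  obtain ⟨r, hr⟩ := this
  exact ⟨r, by rw [hq, hr]; ring⟩

lemma Qp_monic (n k : ℕ) : (Qp n k).Monic :=
  monic_prod_of_monic _ _ fun j _ => (monic_X_add_C _).pow 2

lemma Qp_natDegree {n k : ℕ} (hk : k ∈ Finset.range (n+1)) :
    (Qp n k).natDegree = 2*n := by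
  rw [Qp, natDegree_prod_of_monic _ _ fun j _ => (monic_X_add_C _).pow 2]
  have : ∀ j : ℕ, ((X + C (j:ℚ))^2).natDegree = 2 := fun j => by
    rw [natDegree_pow, natDegree_X_add_C]
  rw [Finset.sum_congr rfl fun j _ => this j, Finset.sum_const,
    Finset.card_erase_of_mem hk, Finset.card_range, smul_eq_mul]
  omega

lemma M_monic (n : ℕ) : (∏ j ∈ Finset.Icc 1 n, (X - C (j:ℚ))^2).Monic :=
  monic_prod_of_monic _ _ fun j _ => (monic_X_sub_C _).pow 2

lemma M_natDegree (n : ℕ) : (∏ j ∈ Finset.Icc 1 n, (X - C (j:ℚ))^2).natDegree = 2*n := by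
  rw [natDegree_prod_of_monic _ _ fun j _ => (monic_X_sub_C _).pow 2]
  have : ∀ j : ℕ, ((X - C (j:ℚ))^2).natDegree = 2 := fun j => by
    rw [natDegree_pow, natDegree_X_sub_C]
  rw [Finset.sum_congr rfl fun j _ => this j, Finset.sum_const, Nat.card_Icc, smul_eq_mul]
  omega

lemma Fp_degree_le (n k : ℕ) : (Fp n k).degree ≤ 1 := by
  rw [Fp]
  refine le_trans (degree_add_le _ _) (max_le (le_trans degree_C_le (by norm_num)) ?_)
  refine le_trans (degree_mul_le _ _) ?_
  calc (C (Bk n k)).degree + (X + C (k:ℚ)).degree ≤ 0 + 1 :=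
        add_le_add degree_C_le (le_of_eq (degree_X_add_C _))
    _ = 1 := by norm_num

lemma deg_cast (n : ℕ) : (1 : WithBot ℕ) + ((2*n:ℕ) : WithBot ℕ) = ((2*n+1 : ℕ) : WithBot ℕ) := by
  norm_cast
  omega

lemma Dp_degree_le (n : ℕ) : (Dp n).degree ≤ ((2*n+1 : ℕ) : WithBot ℕ) := by
  have hPp : (Pp n).degree ≤ ((2*n+1:ℕ) : WithBot ℕ) := by
    rw [Pp]
    refine le_trans (degree_mul_le _ _) ?_
    rw [degree_X, degree_eq_natDegree (M_monic n).ne_zero, M_natDegree, deg_cast]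
  have hsum : (∑ k ∈ Finset.range (n+1), Fp n k * Qp n k).degree
      ≤ ((2*n+1 : ℕ) : WithBot ℕ) := by
    refine le_trans (degree_sum_le _ _) ?_
    refine Finset.sup_le fun k hk => ?_
    refine le_trans (degree_mul_le _ _) ?_
    have hq : (Qp n k).degree = ((2*n:ℕ) : WithBot ℕ) := by
      rw [degree_eq_natDegree (Qp_monic n k).ne_zero, Qp_natDegree hk]
    rw [← deg_cast]
    exact add_le_add (Fp_degree_le n k) (le_of_eq hq)
  exact le_trans (degree_sub_le _ _) (max_le hPp hsum)

lemma Dp_eq_zero (n : ℕ) : Dp n = 0 := by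
  have hdvd : (∏ k ∈ Finset.range (n+1), (X - C (-(k:ℚ)))^2) ∣ Dp n := by
    refine Finset.prod_dvd_of_coprime ?_
      (fun k hk => sq_dvd_of_double_root (Dp_eval hk) (Dp_deriv_eval hk))
    intro i hi j hj hne
    have hij : ((-(i:ℚ)) - (-(j:ℚ))) ≠ 0 := by
      intro h
      have : (i:ℚ) = (j:ℚ) := by linarith
      exact hne (by exact_mod_cast this)
    exact (isCoprime_X_sub_C_of_isUnit_sub hij.isUnit).pow
  have hRmonic : (∏ k ∈ Finset.range (n+1), (X - C (-(k:ℚ)))^2).Monic :=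
    monic_prod_of_monic _ _ fun j _ => (monic_X_sub_C _).pow 2
  have hRdeg : (∏ k ∈ Finset.range (n+1), (X - C (-(k:ℚ)))^2).natDegree = 2*n+2 := by
    rw [natDegree_prod_of_monic _ _ fun j _ => (monic_X_sub_C _).pow 2]
    have : ∀ j : ℕ, ((X - C (-(j:ℚ)))^2).natDegree = 2 := fun j => by
      rw [natDegree_pow, natDegree_X_sub_C]
    rw [Finset.sum_congr rfl fun j _ => this j, Finset.sum_const, Finset.card_range, smul_eq_mul]
    omega
  refine eq_zero_of_dvd_of_degree_lt hdvd ?_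
  rw [degree_eq_natDegree hRmonic.ne_zero, hRdeg]
  refine lt_of_le_of_lt (Dp_degree_le n) ?_
  exact_mod_cast Nat.lt_succ_self (2*n+1)

lemma sum_Bk (n : ℕ) : ∑ k ∈ Finset.range (n+1), Bk n k = 1 := by
  have hD := Dp_eq_zero n
  rw [Dp, sub_eq_zero] at hD
  have hco := congrArg (fun p : ℚ[X] => p.coeff (2*n+1)) hD
  have hP : (Pp n).coeff (2*n+1) = 1 := by
    rw [Pp, show 2*n+1 = (2*n)+1 from rfl, coeff_X_mul]
    have := (M_monic n).coeff_natDegree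
    rwa [M_natDegree n] at this
  have hQtop : ∀ k ∈ Finset.range (n+1), (Qp n k).coeff (2*n+1) = 0 := fun k hk =>
    coeff_eq_zero_of_natDegree_lt (by rw [Qp_natDegree hk]; omega)
  have hQlead : ∀ k ∈ Finset.range (n+1), (Qp n k).coeff (2*n) = 1 := fun k hk => by
    have := (Qp_monic n k).coeff_natDegree
    rwa [Qp_natDegree hk] at this
  have hterm : ∀ k ∈ Finset.range (n+1), (Fp n k * Qp n k).coeff (2*n+1) = Bk n k := by
    intro k hk
    rw [Fp, add_mul, mul_assoc, coeff_add, coeff_C_mul, coeff_C_mul, add_mul, coeff_add]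
    rw [show (2*n+1) = (2*n)+1 from rfl, coeff_X_mul, coeff_C_mul]
    rw [hQtop k hk, hQlead k hk]
    ring
  rw [hP, finset_sum_coeff, Finset.sum_congr rfl hterm] at hco
  exact hco.symm

end AO
end

theorem ahlgren_ono_identity (n : ℕ) (hn : 1 ≤ n) :
    ∑ k ∈ Finset.Icc 1 n,
      (k : ℚ) * (n.choose k : ℚ) ^ 2 * ((n + k).choose k : ℚ) ^ 2 *
        (1 / (2 * (k : ℚ)) + ∑ i ∈ Finset.Icc 1 (n + k), (1 : ℚ) / i
          + ∑ i ∈ Finset.Icc 1 (n - k), (1 : ℚ) / i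
          - 2 * ∑ i ∈ Finset.Icc 1 k, (1 : ℚ) / i) = 0 := by
  have hsum := AO.sum_Bk n
  have hsplit : Finset.range (n+1) = insert 0 (Finset.Icc 1 n) := by
    ext i; simp only [Finset.mem_range, Finset.mem_insert, Finset.mem_Icc]; omega
  rw [hsplit, Finset.sum_insert (by simp)] at hsum
  have hB0 : AO.Bk n 0 = 1 := by simp [AO.Bk, AO.Ak]
  rw [hB0] at hsum
  have hzero : ∑ k ∈ Finset.Icc 1 n, AO.Bk n k = 0 := by linarith
  have hterm : ∀ k ∈ Finset.Icc 1 n,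
      (k : ℚ) * (n.choose k : ℚ) ^ 2 * ((n + k).choose k : ℚ) ^ 2 *
        (1 / (2 * (k : ℚ)) + ∑ i ∈ Finset.Icc 1 (n + k), (1 : ℚ) / i
          + ∑ i ∈ Finset.Icc 1 (n - k), (1 : ℚ) / i
          - 2 * ∑ i ∈ Finset.Icc 1 k, (1 : ℚ) / i) = AO.Bk n k / 2 := by
    intro k hk
    have hk1 : 1 ≤ k := (Finset.mem_Icc.mp hk).1
    have hk0 : (k:ℚ) ≠ 0 := by
      have : (1:ℚ) ≤ (k:ℚ) := by exact_mod_cast hk1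
      intro h; linarith
    simp only [AO.Bk, AO.Ak, AO.H]
    field_simp
    ring
  rw [Finset.sum_congr rfl hterm, ← Finset.sum_div, hzero]
  norm_num
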